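/- Let ν be a finite complex Borel measure on ℂ with compact support and let η be a finite positive Borel measure on ℂ with compact support that is of c-linear growth for some c > 0 (i.e., η(D(λ,δ)) ≤ cδ for all λ ∈ ℂ and δ > 0) and mutually singular with |ν|. Then η(ND(ν)) = 0, where ND(ν) = {λ : limsup_{δ→0} |ν|(D(λ,δ))/δ > 0}. -/

import Mathlib

open MeasureTheory Filter Metric Set Complex Topology

noncomputable section

/-- The analytic capacity of a compact set `B ⊆ ℂ`: the supremum of `|f'(∞)|` over functions
`f` analytic on `(ℂ ∪ {∞}) \ B` bounded by `1` there, where `f(∞) = lim_{z→∞} f(z)` and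
`f'(∞) = lim_{z→∞} z (f(z) - f(∞))`. -/
def capCompact (B : Set ℂ) : ℝ :=
  sSup {r : ℝ | ∃ (f : ℂ → ℂ) (c d : ℂ),
    DifferentiableOn ℂ f Bᶜ ∧ (∀ z ∈ Bᶜ, ‖f z‖ ≤ 1) ∧
    Tendsto f (Bornology.cobounded ℂ) (𝓝 c) ∧
    Tendsto (fun z => z * (f z - c)) (Bornology.cobounded ℂ) (𝓝 d) ∧
    r = ‖d‖}

/-- The analytic capacity of an arbitrary set `E ⊆ ℂ`. -/
def anCap (E : Set ℂ) : ℝ :=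
  sSup {r : ℝ | ∃ B : Set ℂ, IsCompact B ∧ B ⊆ E ∧ r = capCompact B}

/-- The truncated Cauchy transform `C_ε(g·σ)(z) = ∫_{|w-z|>ε} (w-z)⁻¹ g(w) dσ(w)`. -/
def truncCT (σ : Measure ℂ) (g : ℂ → ℂ) (ε : ℝ) (z : ℂ) : ℂ :=
  ∫ w in {w : ℂ | ε < dist w z}, (w - z)⁻¹ * g w ∂σ

/-- The principal value Cauchy transform of `g·σ` exists at `z` with value `L`. -/
def CTTendsto (σ : Measure ℂ) (g : ℂ → ℂ) (z L : ℂ) : Prop :=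
  Tendsto (fun ε => truncCT σ g ε z) (𝓝[>] (0 : ℝ)) (𝓝 L)

/-- The principal value Cauchy transform of `g·σ` exists at `z`. -/
def CTExists (σ : Measure ℂ) (g : ℂ → ℂ) (z : ℂ) : Prop := ∃ L, CTTendsto σ g z L

/-- The principal value Cauchy transform `C(g·σ)(z)` (junk value where the limit fails). -/
def cauchyPV (σ : Measure ℂ) (g : ℂ → ℂ) (z : ℂ) : ℂ :=
  limUnder (𝓝[>] (0 : ℝ)) (fun ε => truncCT σ g ε z)

/-- The total-variation measure of the complex measure `g·σ`. -/
def varM (σ : Measure ℂ) (g : ℂ → ℂ) : Measure ℂ :=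
  σ.withDensity fun w => (‖g w‖₊ : ENNReal)

/-- The zero linear density set of a positive measure. -/
def ZDset (τ : Measure ℂ) : Set ℂ :=
  {p : ℂ | Tendsto (fun δ => τ (ball p δ) / ENNReal.ofReal δ) (𝓝[>] (0 : ℝ)) (𝓝 0)}

/-- The non-zero linear density set of a positive measure. -/
def NDset (τ : Measure ℂ) : Set ℂ :=
  {p : ℂ | 0 < Filter.limsup (fun δ => τ (ball p δ) / ENNReal.ofReal δ) (𝓝[>] (0 : ℝ))}

/-- The (closed) support of a positive Borel measure on `ℂ`. -/
def msupport (η : Measure ℂ) : Set ℂ := {x : ℂ | ∀ δ > 0, 0 < η (ball x δ)}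

/-- Rational functions with poles off `K`. -/
def RatOn (K : Set ℂ) : Set (ℂ → ℂ) :=
  {f | ∃ p q : Polynomial ℂ, (∀ z ∈ K, q.eval z ≠ 0) ∧ f = fun z => p.eval z / q.eval z}

/-- Membership in `R^t(K,μ)`, the closure of `Rat(K)` in `L^t(μ)`. -/
def MemRt (K : Set ℂ) (μ : Measure ℂ) (t : ℝ) (f : ℂ → ℂ) : Prop :=
  MemLp f (ENNReal.ofReal t) μ ∧
  ∀ ε > 0, ∃ r ∈ RatOn K, eLpNorm (fun z => r z - f z) (ENNReal.ofReal t) μ < ENNReal.ofReal ε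

/-- `g ⊥ R^t(K,μ)`: `g ∈ L^s(μ)` annihilates all rational functions with poles off `K`. -/
def Annih (K : Set ℂ) (μ : Measure ℂ) (s : ℝ) (g : ℂ → ℂ) : Prop :=
  MemLp g (ENNReal.ofReal s) μ ∧ ∀ r ∈ RatOn K, ∫ z, r z * g z ∂μ = 0

/-- Purity of `S_μ` on `R^t(K,μ)`: no nontrivial direct `L^t` summand. -/
def PureSμ (K : Set ℂ) (μ : Measure ℂ) (t : ℝ) : Prop :=
  ¬ ∃ Δ : Set ℂ, MeasurableSet Δ ∧ 0 < μ Δ ∧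
    ∀ f : ℂ → ℂ, MemLp f (ENNReal.ofReal t) μ → MemRt K μ t (Δ.indicator f)

/-- The rotated Lipschitz graph with rotation angle `βn` of `An : ℝ → ℝ`. -/
def rotGraph (βn : ℝ) (An : ℝ → ℝ) : Set ℂ :=
  Set.range fun x : ℝ => Complex.exp (βn * Complex.I) * ((x : ℂ) + (An x : ℂ) * Complex.I)

/-- The density `L(z)` on the graph of a Lipschitz function `A`. -/
def Lfn (An : ℝ → ℝ) (w : ℂ) : ℂ :=
  (1 + Complex.ofReal (deriv An w.re) * Complex.I) /
    (2 * (Real.pi : ℂ) * Complex.I * Complex.ofReal (Real.sqrt (1 + (deriv An w.re) ^ 2)))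

/-- The `∂̄`-operator. -/
def dbar (φ : ℂ → ℂ) (z : ℂ) : ℂ :=
  (fderiv ℝ φ z 1 + Complex.I * fderiv ℝ φ z Complex.I) / 2


theorem stmt7 (σ : Measure ℂ) [IsFiniteMeasure σ]
    (hsupp : ∃ B : Set ℂ, IsCompact B ∧ σ Bᶜ = 0)
    (g : ℂ → ℂ) (hg : Integrable g σ)
    (η : Measure ℂ) [IsFiniteMeasure η]
    (hηsupp : ∃ B : Set ℂ, IsCompact B ∧ η Bᶜ = 0)
    (c : ℝ) (hc : 0 < c)
    (hgrowth : ∀ p : ℂ, ∀ δ > 0, η (ball p δ) ≤ ENNReal.ofReal (c * δ))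
    (hsing : Measure.MutuallySingular η (varM σ g)) :
    η (NDset (varM σ g)) = 0 := by
  set τ := varM σ g with hτ
  have hτfin : IsFiniteMeasure τ := by
    constructor
    rw [hτ, varM, withDensity_apply _ MeasurableSet.univ]
    simpa [HasFiniteIntegral, enorm_eq_nnnorm] using hg.2
  have hrn : τ.rnDeriv η =ᵐ[η] 0 :=
    (Measure.rnDeriv_eq_zero τ η).mpr hsing.symm
  have hae := Besicovitch.ae_tendsto_rnDeriv τ η
  have key : ∀ᵐ p ∂η, p ∉ NDset τ := by
    filter_upwards [hrn, hae] with p hp0 hplim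
    rw [Pi.zero_apply] at hp0
    rw [hp0] at hplim
    -- hplim : Tendsto (fun r => τ (closedBall p r) / η (closedBall p r)) (𝓝[>] 0) (𝓝 0)
    intro hmem
    have hbound : ∀ δ ∈ Ioi (0:ℝ),
        τ (ball p δ) / ENNReal.ofReal δ ≤
          ENNReal.ofReal (2*c) * (τ (closedBall p δ) / η (closedBall p δ)) := by
      intro δ hδ
      have hδ' : (0:ℝ) < δ := hδ
      set A := τ (closedBall p δ)
      set b := η (closedBall p δ)
      have hbA : b ≤ ENNReal.ofReal (2*c) * ENNReal.ofReal δ := by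
        calc b ≤ η (ball p (2*δ)) := measure_mono (closedBall_subset_ball (by linarith))
        _ ≤ ENNReal.ofReal (c * (2*δ)) := hgrowth p (2*δ) (by linarith)
        _ = ENNReal.ofReal (2*c) * ENNReal.ofReal δ := by
            rw [← ENNReal.ofReal_mul (by linarith)]; ring_nf
      rw [ENNReal.div_le_iff (by simp [hδ']) (by simp)]
      rcases eq_or_ne b 0 with hb | hb
      · rcases eq_or_ne A 0 with hA | hA
        · calc τ (ball p δ) ≤ A := measure_mono ball_subset_closedBall
          _ = 0 := hA
          _ ≤ _ := zero_le
        · have : A / b = ⊤ := by simp [hb, hA, ENNReal.div_zero]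
          rw [this]
          rw [ENNReal.mul_top (by simp [hc]), ENNReal.top_mul (by simp [hδ'])]
          exact le_top
      · have hbtop : b ≠ ⊤ := (measure_lt_top η _).ne
        calc τ (ball p δ) ≤ A := measure_mono ball_subset_closedBall
        _ = A / b * b := (ENNReal.div_mul_cancel hb hbtop).symm
        _ ≤ A / b * (ENNReal.ofReal (2*c) * ENNReal.ofReal δ) := by
            exact mul_le_mul_right hbA _
        _ = ENNReal.ofReal (2*c) * (A / b) * ENNReal.ofReal δ := by ring
    have hT : Tendsto (fun δ => τ (ball p δ) / ENNReal.ofReal δ) (𝓝[>] (0:ℝ)) (𝓝 0) := by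
      have h2 : Tendsto (fun δ => ENNReal.ofReal (2*c) *
          (τ (closedBall p δ) / η (closedBall p δ))) (𝓝[>] (0:ℝ)) (𝓝 0) := by
        have := ENNReal.Tendsto.const_mul (a := ENNReal.ofReal (2*c)) hplim (Or.inr ENNReal.ofReal_ne_top)
        simpa using this
      refine tendsto_of_tendsto_of_tendsto_of_le_of_le' tendsto_const_nhds h2 ?_ ?_
      · filter_upwards with δ; exact zero_le
      · exact eventually_nhdsWithin_of_forall hbound
    have := hT.limsup_eq
    rw [NDset, mem_setOf_eq, this] at hmem
    exact lt_irrefl 0 hmem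
  refine measure_mono_null ?_ (ae_iff.mp key)
  intro p hp hn
  exact hn hp


end
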